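/- Let R be a commutative ring and U an r×n matrix over R whose minors are denoted u^{a₁...a_r} := det U^{a₁...a_r}. Fix (a₁,...,a_r) with u^{a₁...a_r} invertible. Then for all (b₁,...,b_r): det of the r×r matrix whose (i,j) entry is u^{a₁...a_{i-1} b_j a_{i+1}...a_r} equals (u^{a₁...a_r})^{r−1} · u^{b₁...b_r}. -/

import Mathlib

/- STATEMENT 18: determinantal form of the Plücker relations (Sylvester-type
identity): for the minors u a = det of the submatrix of an (r+1)×n matrix U on
columns a, with u a invertible, the determinant of the (r+1)×(r+1) matrix whose
(i,j) entry is the minor with b_j substituted in the i-th slot of the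
multi-index a equals (u a)^r · u b. -/
theorem sylvester_form_of_pluecker_relations
    {R : Type} [CommRing R] {r n : ℕ}
    (U : Matrix (Fin (r + 1)) (Fin n) R)
    (u : (Fin (r + 1) → Fin n) → R)
    (hu : ∀ a : Fin (r + 1) → Fin n, u a = (U.submatrix id a).det)
    (a : Fin (r + 1) → Fin n) (ha : IsUnit (u a))
    (b : Fin (r + 1) → Fin n) :
    (Matrix.of fun i j : Fin (r + 1) => u (Function.update a i (b j))).det
      = u a ^ r * u b := by
  set A := U.submatrix id a with hA
  set B := U.submatrix id b with hB
  have key : (Matrix.of fun i j : Fin (r + 1) => u (Function.update a i (b j)))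
      = A.adjugate * B := by
    ext i j
    have h1 : U.submatrix id (Function.update a i (b j))
        = A.updateCol i (fun k => U k (b j)) := by
      ext k l
      by_cases hl : l = i <;>
        simp [Matrix.updateCol_apply, Function.update_apply, hl, hA]
    rw [Matrix.of_apply, hu, h1, ← Matrix.cramer_apply,
      Matrix.cramer_eq_adjugate_mulVec]
    simp [Matrix.mul_apply, Matrix.mulVec, dotProduct, hB]
  rw [key, Matrix.det_mul, Matrix.det_adjugate, hu a, hu b]
  simp [hA, hB]
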